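/- Let G be a symmetric 4-linear form on ℝⁿ, L(y) = G(y,y,y,y), U, V ∈ ℝⁿ, ℓ ≠ 0, with L(ℓU + V) = 0 and L(ℓU − V) = 0, and suppose G(V,U,U,U) ≠ 0. Then the sixth-order polynomial necessary condition holds: G(U,U,U,U)·G(V,V,V,U)² + G(V,V,V,V)·G(V,U,U,U)² − 6 G(V,V,U,U)·G(V,V,V,U)·G(V,U,U,U) = 0. -/

import Mathlib

theorem quartic_radar_necessary_condition
    (n : ℕ)
    (G : (Fin n → ℝ) →ₗ[ℝ] (Fin n → ℝ) →ₗ[ℝ] (Fin n → ℝ) →ₗ[ℝ] (Fin n → ℝ) →ₗ[ℝ] ℝ)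
    (hs1 : ∀ a b c d, G a b c d = G b a c d)
    (hs2 : ∀ a b c d, G a b c d = G a c b d)
    (hs3 : ∀ a b c d, G a b c d = G a b d c)
    (U V : Fin n → ℝ) (ℓ : ℝ) (hℓ : ℓ ≠ 0)
    (h1 : G (ℓ • U + V) (ℓ • U + V) (ℓ • U + V) (ℓ • U + V) = 0)
    (h2 : G (ℓ • U - V) (ℓ • U - V) (ℓ • U - V) (ℓ • U - V) = 0)
    (hne : G V U U U ≠ 0) :
    G U U U U * (G V V V U) ^ 2 + G V V V V * (G V U U U) ^ 2
      - 6 * G V V U U * G V V V U * G V U U U = 0 := by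
  have e1 : ∀ c d, G U V c d = G V U c d := fun c d => hs1 U V c d
  have e2 : ∀ a d, G a U V d = G a V U d := fun a d => hs2 a U V d
  have e3 : ∀ a b, G a b U V = G a b V U := fun a b => hs3 a b U V
  rw [sub_eq_add_neg, ← neg_one_smul ℝ V] at h2
  simp only [map_add, map_sub, map_smul, LinearMap.add_apply, LinearMap.sub_apply,
    LinearMap.smul_apply, smul_eq_mul, e1, e2, e3] at h1 h2
  have k0 : ℓ * (ℓ ^ 2 * G V U U U + G V V V U) = 0 := by linear_combination (h1 - h2) / 8
  have k1 : ℓ ^ 2 * G V U U U + G V V V U = 0 := by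
    rcases mul_eq_zero.mp k0 with h | h
    · exact absurd h hℓ
    · exact h
  have k2 : ℓ ^ 4 * G U U U U + 6 * ℓ ^ 2 * G V V U U + G V V V V = 0 := by
    linear_combination (h1 + h2) / 2
  linear_combination (G V U U U) ^ 2 * k2 +
    (G U U U U * (G V V V U - ℓ ^ 2 * G V U U U) - 6 * G V V U U * G V U U U) * k1
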